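/- Let 0 < r < 1 < q < ∞. Let v be a weight on (0,∞), u ∈ Ω̃_r and w ∈ Ω_q. Then for every nonnegative measurable f on (0,∞), ‖f‖_{M(Cop_r(u), Ces_{1,q}(w,v))} ≈ ess sup_{x∈(0,∞)} f(x) v(x) (∫_0^x u(σ)^r dσ)^{−1/r} (∫_x^∞ w(σ)^q dσ)^{1/q}, with equivalence constants depending only on q and r. -/

import Mathlib

open MeasureTheory ENNReal Set Filter
open Topology

/-- `‖f‖_{p,s}`: the Lebesgue functional `(∫_s f^p)^{1/p}` for `p < ∞`,
and `esssup_s f` for `p = ∞`. -/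
noncomputable def wNorm (p : ℝ≥0∞) (f : ℝ → ℝ≥0∞) (s : Set ℝ) : ℝ≥0∞ :=
  if p = ∞ then essSup f (volume.restrict s)
  else (∫⁻ x in s, f x ^ p.toReal) ^ (1 / p.toReal)

/-- The weighted Cesàro functional `‖f‖_{Ces_{p,q}(u,v)} = ‖ t ↦ ‖f‖_{p,v,(0,t)} ‖_{q,u,(0,∞)}`. -/
noncomputable def cesaroNorm (p q : ℝ≥0∞) (u v : ℝ → ℝ≥0∞) (f : ℝ → ℝ≥0∞) : ℝ≥0∞ :=
  wNorm q (fun t => wNorm p (fun x => f x * v x) (Ioo 0 t) * u t) (Ioi 0)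

/-- The weighted Copson functional `‖f‖_{Cop_{p,q}(u,v)} = ‖ t ↦ ‖f‖_{p,v,(t,∞)} ‖_{q,u,(0,∞)}`. -/
noncomputable def copsonNorm (p q : ℝ≥0∞) (u v : ℝ → ℝ≥0∞) (f : ℝ → ℝ≥0∞) : ℝ≥0∞ :=
  wNorm q (fun t => wNorm p (fun x => f x * v x) (Ioi t) * u t) (Ioi 0)

/-- The multiplier functional `‖f‖_{M(X,Y)} = sup { ‖f·g‖_Y / ‖g‖_X :
g nonnegative measurable, g not a.e. zero on (0,∞) }`. -/
noncomputable def multNorm (X Y : (ℝ → ℝ≥0∞) → ℝ≥0∞) (f : ℝ → ℝ≥0∞) : ℝ≥0∞ :=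
  ⨆ (g : ℝ → ℝ≥0∞) (_ : Measurable g ∧
      ¬ (∀ᵐ x ∂(volume.restrict (Ioi (0:ℝ))), g x = 0)),
    Y (fun x => f x * g x) / X g

/-- A weight on `(0,∞)`: measurable, positive and finite a.e. on `(0,∞)`. -/
def IsWeightOn (v : ℝ → ℝ≥0∞) : Prop :=
  Measurable v ∧ ∀ᵐ x ∂(volume.restrict (Ioi (0:ℝ))), 0 < v x ∧ v x < ∞

/-- `u ∈ Ω_q`: `0 < ‖u‖_{q,(t,∞)} < ∞` for all `t > 0`. -/
def MemOmega (q : ℝ≥0∞) (u : ℝ → ℝ≥0∞) : Prop :=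
  Measurable u ∧ ∀ t : ℝ, 0 < t → 0 < wNorm q u (Ioi t) ∧ wNorm q u (Ioi t) < ∞

/-- `u ∈ Ω̃_q`: `0 < ‖u‖_{q,(0,t)} < ∞` for all `t > 0`. -/
def MemOmegaDual (q : ℝ≥0∞) (u : ℝ → ℝ≥0∞) : Prop :=
  Measurable u ∧ ∀ t : ℝ, 0 < t → 0 < wNorm q u (Ioo 0 t) ∧ wNorm q u (Ioo 0 t) < ∞

/-- The exponent `p'`: `p/(1−p)` if `p < 1`, `∞` if `p = 1`, `p/(p−1)` if `p > 1`. -/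
noncomputable def dualExp (p : ℝ) : ℝ≥0∞ :=
  if p < 1 then ENNReal.ofReal (p / (1 - p))
  else if p = 1 then ∞
  else ENNReal.ofReal (p / (p - 1))

/-- An admissible function: continuous and strictly increasing on `[0,∞)`,
vanishing at `0` and tending to `∞` at `∞`. -/
def AdmissibleFn (U : ℝ → ℝ≥0∞) : Prop :=
  ContinuousOn U (Ici 0) ∧ StrictMonoOn U (Ici 0) ∧ U 0 = 0 ∧
    Tendsto U atTop (nhds ∞)

/-- φ is equivalent to ψ on `(0,∞)` up to multiplicative constants. -/
def EquivOn (φ ψ : ℝ → ℝ≥0∞) : Prop :=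
  ∃ c C : ℝ≥0∞, 0 < c ∧ C < ∞ ∧ ∀ x ∈ Ioi (0:ℝ), c * ψ x ≤ φ x ∧ φ x ≤ C * ψ x

/-- `φ ∈ Q_U`: φ is non-degenerate and `U`-quasiconcave, i.e. φ is equivalent to a
nondecreasing function on `(0,∞)`, `φ/U` is equivalent to a nonincreasing function on
`(0,∞)`, and `lim_{t→0+} φ(t) = lim_{t→∞} 1/φ(t) = lim_{t→∞} φ(t)/U(t)
= lim_{t→0+} U(t)/φ(t) = 0`. -/
def MemQClass (U φ : ℝ → ℝ≥0∞) : Prop :=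
  (∃ ψ : ℝ → ℝ≥0∞, MonotoneOn ψ (Ioi 0) ∧ EquivOn φ ψ) ∧
  (∃ ψ : ℝ → ℝ≥0∞, AntitoneOn ψ (Ioi 0) ∧ EquivOn (fun x => φ x / U x) ψ) ∧
  Tendsto φ (nhdsWithin 0 (Ioi 0)) (nhds 0) ∧
  Tendsto (fun t => (φ t)⁻¹) atTop (nhds 0) ∧
  Tendsto (fun t => φ t / U t) atTop (nhds 0) ∧
  Tendsto (fun t => U t / φ t) (nhdsWithin 0 (Ioi 0)) (nhds 0)


lemma aux_inv_mul_le_one (a : ℝ≥0∞) : a⁻¹ * a ≤ 1 := by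
  rcases eq_or_ne a 0 with rfl | h0
  · simp
  rcases eq_or_ne a ∞ with rfl | ht
  · simp
  rw [ENNReal.inv_mul_cancel h0 ht]

lemma aux_ofReal_toReal_rpow {a : ℝ≥0∞} (ha : a ≠ ∞) {r : ℝ} (hr : 0 ≤ r) :
    ENNReal.ofReal (a.toReal ^ r) = a ^ r := by
  rw [ENNReal.toReal_rpow, ENNReal.ofReal_toReal (ENNReal.rpow_ne_top_of_nonneg hr ha)]

lemma aux_iInter_Iio (c : ℝ) : (⋂ n : ℕ, Iio (c + 1 / (n + 1))) = Iic c := by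
  ext x
  simp only [mem_iInter, mem_Iio, mem_Iic]
  constructor
  · intro h
    by_contra hx
    push_neg at hx
    obtain ⟨n, hn⟩ := exists_nat_one_div_lt (show (0:ℝ) < x - c by linarith)
    have := h n
    push_cast at this hn
    linarith
  · intro h n
    have : (0:ℝ) < 1 / (n + 1) := by positivity
    linarith

lemma aux_iUnion_Ioi (c : ℝ) : (⋃ n : ℕ, Ioi (c + 1 / (n + 1))) = Ioi c := by
  ext x
  simp only [mem_iUnion, mem_Ioi]
  constructor
  · rintro ⟨n, hn⟩
    have : (0:ℝ) < 1 / (n + 1) := by positivity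
    linarith
  · intro h
    obtain ⟨n, hn⟩ := exists_nat_one_div_lt (show (0:ℝ) < x - c by linarith)
    exact ⟨n, by push_cast at hn ⊢; linarith⟩

lemma aux_iInter_Icc (c : ℝ) : (⋂ n : ℕ, Icc (c - 1 / (n + 1)) (c + 1 / (n + 1))) = {c} := by
  ext x
  simp only [mem_iInter, mem_Icc, mem_singleton_iff]
  constructor
  · intro h
    have h1 : x ≤ c := by
      by_contra hx
      push_neg at hx
      obtain ⟨n, hn⟩ := exists_nat_one_div_lt (show (0:ℝ) < x - c by linarith)
      have := (h n).2
      push_cast at this hn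
      linarith
    have h2 : c ≤ x := by
      by_contra hx
      push_neg at hx
      obtain ⟨n, hn⟩ := exists_nat_one_div_lt (show (0:ℝ) < c - x by linarith)
      have := (h n).1
      push_cast at this hn
      linarith
    linarith
  · rintro rfl n
    have : (0:ℝ) < 1 / (n + 1) := by positivity
    constructor <;> linarith


lemma aux_frac_anti : Antitone (fun n : ℕ => 1/((n:ℝ)+1)) := by
  intro a b hab
  have : ((a:ℝ)+1) ≤ ((b:ℝ)+1) := by
    have := (Nat.cast_le (α := ℝ)).mpr hab
    linarith
  exact one_div_le_one_div_of_le (by positivity) this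

/-- The key estimate: `∫_{(0,∞)} g·U^{1/r} ≤ (1/r)·(∫ u^r G^r)^{1/r}` for `0 < r < 1`. -/
lemma key_est {r : ℝ} (hr : 0 < r) (hr1 : r < 1) (u g : ℝ → ℝ≥0∞)
    (hu : Measurable u) (hg : Measurable g)
    (hUfin : ∀ x : ℝ, (∫⁻ σ in Ioo 0 x, u σ ^ r) ≠ ∞)
    (hgfin : (∫⁻ y in Ioi (0:ℝ), g y) ≠ ∞) :
    ∫⁻ x in Ioi (0:ℝ), g x * (∫⁻ σ in Ioo 0 x, u σ ^ r) ^ (1/r) ≤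
      ENNReal.ofReal (1/r) *
        (∫⁻ t in Ioi (0:ℝ), u t ^ r * (∫⁻ y in Ioi t, g y) ^ r) ^ (1/r) := by
  have hp0 : 0 < 1/r := by positivity
  set p : ℝ := 1/r with hpdef
  have hrp : r * p = 1 := by rw [hpdef]; field_simp
  have hp1 : 1 < p := by
    rw [hpdef, lt_div_iff₀ hr, one_mul]
    exact hr1
  set U : ℝ → ℝ≥0∞ := fun x => ∫⁻ σ in Ioo 0 x, u σ ^ r with hUdef
  set G : ℝ → ℝ≥0∞ := fun t => ∫⁻ y in Ioi t, g y with hGdef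
  set T : ℝ≥0∞ := ∫⁻ t in Ioi (0:ℝ), u t ^ r * G t ^ r with hTdef
  have hUmono : Monotone U := fun a b hab =>
    lintegral_mono_set (Ioo_subset_Ioo le_rfl hab)
  have hUmeas : Measurable U := hUmono.measurable
  have hGanti : Antitone G := fun a b hab => lintegral_mono_set (Ioi_subset_Ioi hab)
  have hGmeas : Measurable G := hGanti.measurable
  have hGfin : ∀ t : ℝ, 0 < t → G t ≠ ∞ := fun t ht =>
    ne_top_of_le_ne_top hgfin (lintegral_mono_set (Ioi_subset_Ioi ht.le))
  rcases eq_or_ne T ∞ with hTtop | hTne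
  · rw [hTtop, ENNReal.top_rpow_of_pos hp0, ENNReal.mul_top
      (ENNReal.ofReal_pos.mpr hp0).ne']
    exact le_top
  set μg : Measure ℝ := (volume.restrict (Ioi (0:ℝ))).withDensity g with hμgdef
  set ν : Measure ℝ := (volume.restrict (Ioi (0:ℝ))).withDensity (fun t => u t ^ r) with hνdef
  have hνIoo : ∀ y : ℝ, ν (Ioo 0 y) = U y := by
    intro y
    rw [hνdef, withDensity_apply _ measurableSet_Ioo,
      Measure.restrict_restrict measurableSet_Ioo,
      inter_eq_left.mpr Ioo_subset_Ioi_self]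
  have hνIio : ∀ y : ℝ, ν (Iio y) = U y := by
    intro y
    rw [hνdef, withDensity_apply _ measurableSet_Iio,
      Measure.restrict_restrict measurableSet_Iio]
    have : Iio y ∩ Ioi 0 = Ioo 0 y := by ext z; simp [mem_Ioo, and_comm]
    rw [this]
  set H : ℝ → ℝ≥0∞ := fun τ => μg {x : ℝ | τ < (U x).toReal} with hHdef
  have hμguniv : μg univ ≠ ∞ := by
    rw [hμgdef, withDensity_apply _ MeasurableSet.univ, Measure.restrict_univ]
    exact hgfin
  have hHfin : ∀ τ : ℝ, H τ ≠ ∞ := fun τ =>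
    ne_top_of_le_ne_top hμguniv (measure_mono (subset_univ _))
  have hHanti : Antitone H := fun a b hab =>
    measure_mono (fun x hx => lt_of_le_of_lt hab hx)
  have hHmeas : Measurable H := hHanti.measurable
  -- the core construction
  have core : ∀ τ : ℝ, 0 < τ → H τ ≠ 0 → ∃ x0 : ℝ, 0 < x0 ∧ H τ ≤ G x0 ∧
      (∀ y, x0 < y → ENNReal.ofReal τ ≤ U y) ∧
      Tendsto (fun n : ℕ => G (x0 + 1/(n+1))) atTop (𝓝 (G x0)) := by
    intro τ hτ hHτ
    have hEne : {x : ℝ | τ < (U x).toReal}.Nonempty := by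
      rw [nonempty_iff_ne_empty]
      intro h
      rw [hHdef] at hHτ
      simp only [h, measure_empty] at hHτ
      exact hHτ rfl
    obtain ⟨x1, hx1⟩ := hEne
    have hx1' : ENNReal.ofReal τ < U x1 :=
      (ENNReal.ofReal_lt_iff_lt_toReal hτ.le (hUfin x1)).mpr hx1
    set S : Set ℝ := {y | U y ≤ ENNReal.ofReal τ} with hSdef
    have h0small : ∃ y : ℝ, 0 < y ∧ U y < ENNReal.ofReal τ := by
      have hant : Antitone (fun n : ℕ => Iio ((0:ℝ) + 1 / (n + 1))) := fun a b hab =>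
        Iio_subset_Iio (by simpa using add_le_add_left (aux_frac_anti hab) (0:ℝ))
      have htend := tendsto_measure_iInter_atTop (μ := ν)
        (fun n => measurableSet_Iio.nullMeasurableSet) hant
        ⟨0, by rw [hνIio]; exact hUfin _⟩
      rw [aux_iInter_Iio 0] at htend
      have hν0 : ν (Iic (0:ℝ)) = 0 := by
        rw [hνdef, withDensity_apply _ measurableSet_Iic,
          Measure.restrict_restrict measurableSet_Iic]
        have : Iic (0:ℝ) ∩ Ioi 0 = ∅ := by
          ext z; simp only [mem_inter_iff, mem_Iic, mem_Ioi, mem_empty_iff_false, iff_false]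
          rintro ⟨h1, h2⟩; linarith
        rw [this]; simp
      rw [hν0] at htend
      have := (htend.eventually (eventually_lt_nhds (ENNReal.ofReal_pos.mpr hτ))).exists
      obtain ⟨n, hn⟩ := this
      refine ⟨(0:ℝ) + 1/(n+1), by positivity, ?_⟩
      rw [← hνIio]
      exact hn
    obtain ⟨y0, hy0pos, hy0⟩ := h0small
    have hy0S : y0 ∈ S := hy0.le
    have hSbdd : BddAbove S := by
      refine ⟨x1, fun y hy => ?_⟩
      by_contra h
      push_neg at h
      exact absurd (le_trans (hUmono h.le) hy) hx1'.not_ge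
    set x0 := sSup S with hx0def
    have hx0pos : 0 < x0 := lt_of_lt_of_le hy0pos (le_csSup hSbdd hy0S)
    have hx0ub : ∀ y, x0 < y → ENNReal.ofReal τ ≤ U y := by
      intro y hy
      by_contra h
      push_neg at h
      exact absurd (le_csSup hSbdd h.le) (not_le.mpr hy)
    have hE_sub : {x : ℝ | τ < (U x).toReal} ⊆ Ici x0 := by
      intro x hx
      by_contra hlt
      rw [mem_Ici, not_le] at hlt
      obtain ⟨s, hsS, hxs⟩ := exists_lt_of_lt_csSup ⟨y0, hy0S⟩ hlt
      have h1 : U x ≤ ENNReal.ofReal τ := le_trans (hUmono hxs.le) hsS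
      have h2 : ENNReal.ofReal τ < U x :=
        (ENNReal.ofReal_lt_iff_lt_toReal hτ.le (hUfin x)).mpr hx
      exact absurd h1 h2.not_ge
    have hHG : H τ ≤ G x0 := by
      have e1 : μg (Ici x0) = G x0 := by
        rw [hμgdef, withDensity_apply _ measurableSet_Ici,
          Measure.restrict_restrict measurableSet_Ici]
        have : Ici x0 ∩ Ioi 0 = Ici x0 := inter_eq_left.mpr
          (fun z hz => lt_of_lt_of_le hx0pos hz)
        rw [this, hGdef]
        exact setLIntegral_congr (Ioi_ae_eq_Ici (a := x0)).symm
      calc H τ ≤ μg (Ici x0) := measure_mono hE_sub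
      _ = G x0 := e1
    have htendG : Tendsto (fun n : ℕ => G (x0 + 1/(n+1))) atTop (𝓝 (G x0)) := by
      have hGm : ∀ t : ℝ, G t = (volume.withDensity g) (Ioi t) := by
        intro t
        rw [withDensity_apply _ measurableSet_Ioi]
      have hmono : Monotone (fun n : ℕ => Ioi (x0 + 1 / (n + 1 : ℝ))) := fun a b hab =>
        Ioi_subset_Ioi (add_le_add_right (aux_frac_anti hab) x0)
      have h5 := tendsto_measure_iUnion_atTop (μ := volume.withDensity g) hmono
      rw [aux_iUnion_Ioi x0] at h5
      simpa [Function.comp_def, hGm] using h5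
    exact ⟨x0, hx0pos, hHG, hx0ub, htendG⟩
  -- Lemma A
  have lemA : ∀ τ : ℝ, 0 < τ → H τ ^ r * ENNReal.ofReal τ ≤ T := by
    intro τ hτ
    rcases eq_or_ne (H τ) 0 with h0 | hne
    · rw [h0, ENNReal.zero_rpow_of_pos hr, zero_mul]
      exact zero_le
    obtain ⟨x0, hx0pos, hHG, hUge, htend⟩ := core τ hτ hne
    have step : ∀ n : ℕ, G (x0 + 1/(n+1)) ^ r * ENNReal.ofReal τ ≤ T := by
      intro n
      set y := x0 + 1/(n+1:ℝ) with hydef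
      have hy : x0 < y := by
        rw [hydef]; nlinarith [show (0:ℝ) < 1/(n+1) by positivity]
      have hy0 : 0 < y := hx0pos.trans hy
      calc G y ^ r * ENNReal.ofReal τ ≤ G y ^ r * U y :=
            mul_le_mul_right (hUge y hy) _
      _ = ∫⁻ t in Ioo 0 y, u t ^ r * G y ^ r := by
          rw [lintegral_mul_const _ (hu.pow_const r)]
          exact mul_comm _ _
      _ ≤ ∫⁻ t in Ioo 0 y, u t ^ r * G t ^ r := by
          refine setLIntegral_mono ((hu.pow_const r).mul (hGmeas.pow_const r)) ?_
          intro t ht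
          exact mul_le_mul_right (ENNReal.rpow_le_rpow (hGanti ht.2.le) hr.le) _
      _ ≤ T := lintegral_mono_set Ioo_subset_Ioi_self
    have hlim : Tendsto (fun n : ℕ => G (x0 + 1/(n+1)) ^ r * ENNReal.ofReal τ) atTop
        (𝓝 (G x0 ^ r * ENNReal.ofReal τ)) := by
      apply ENNReal.Tendsto.mul_const
      · exact (ENNReal.continuous_rpow_const.tendsto _).comp htend
      · exact Or.inr ENNReal.ofReal_ne_top
    have hfinal : G x0 ^ r * ENNReal.ofReal τ ≤ T :=
      le_of_tendsto hlim (Eventually.of_forall step)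
    exact le_trans (mul_le_mul_left (ENNReal.rpow_le_rpow hHG hr.le) _) hfinal
  -- Lemma B
  have lemB : ∫⁻ τ in Ioi (0:ℝ), H τ ^ r ≤ T := by
    have hTeq : T = ENNReal.ofReal r *
        ∫⁻ lam in Ioi (0:ℝ), ν {x | lam < (G x).toReal} * ENNReal.ofReal (lam ^ (r-1)) := by
      have h1 : T = ∫⁻ x, ENNReal.ofReal ((G x).toReal ^ r) ∂ν := by
        rw [hνdef, lintegral_withDensity_eq_lintegral_mul _ (hu.pow_const r)
          (hGmeas.ennreal_toReal.pow_const r).ennreal_ofReal]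
        rw [hTdef]
        refine setLIntegral_congr_fun measurableSet_Ioi ?_
        intro x hx
        simp only [Pi.mul_apply]
        rw [aux_ofReal_toReal_rpow (hGfin x hx) hr.le]
      rw [h1, lintegral_rpow_eq_lintegral_meas_lt_mul ν
        (Eventually.of_forall fun x => ENNReal.toReal_nonneg)
        hGmeas.ennreal_toReal.aemeasurable hr]
    have hLeq : ∫⁻ τ in Ioi (0:ℝ), H τ ^ r = ENNReal.ofReal r *
        ∫⁻ lam in Ioi (0:ℝ),
          (volume.restrict (Ioi 0)) {τ | lam < (H τ).toReal} * ENNReal.ofReal (lam ^ (r-1)) := by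
      have h1 : ∫⁻ τ in Ioi (0:ℝ), H τ ^ r
          = ∫⁻ τ in Ioi (0:ℝ), ENNReal.ofReal ((H τ).toReal ^ r) :=
        lintegral_congr fun τ => (aux_ofReal_toReal_rpow (hHfin τ) hr.le).symm
      rw [h1, lintegral_rpow_eq_lintegral_meas_lt_mul (volume.restrict (Ioi 0))
        (Eventually.of_forall fun τ => ENNReal.toReal_nonneg)
        hHmeas.ennreal_toReal.aemeasurable hr]
    rw [hLeq, hTeq]
    refine mul_le_mul_right ?_ _
    refine lintegral_mono_ae ?_
    filter_upwards [self_mem_ae_restrict measurableSet_Ioi] with lam hlam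
    refine mul_le_mul_left ?_ _
    set M : ℝ≥0∞ := ν {x | lam < (G x).toReal} with hMdef
    rcases eq_or_ne M ∞ with hM | hM
    · rw [hM]; exact le_top
    rw [Measure.restrict_apply' measurableSet_Ioi]
    have hvol : volume (Ioc (0:ℝ) M.toReal) ≤ M := by
      rw [Real.volume_Ioc, sub_zero, ENNReal.ofReal_toReal hM]
    refine le_trans (measure_mono ?_) hvol
    rintro τ ⟨hτH, hτ0⟩
    simp only [mem_setOf_eq] at hτH
    simp only [mem_Ioi] at hτ0
    refine ⟨hτ0, ?_⟩
    have hHne : H τ ≠ 0 := by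
      intro h
      rw [h] at hτH
      simp only [ENNReal.toReal_zero] at hτH
      exact absurd hτH (not_lt.mpr hlam.le)
    obtain ⟨x0, hx0pos, hHG, hUge, htend⟩ := core τ hτ0 hHne
    have hGx0 : ENNReal.ofReal lam < G x0 :=
      lt_of_lt_of_le ((ENNReal.ofReal_lt_iff_lt_toReal hlam.le (hHfin τ)).mpr hτH) hHG
    obtain ⟨n, hn⟩ := (htend.eventually (eventually_gt_nhds hGx0)).exists
    set y := x0 + 1/(n+1:ℝ) with hydef
    have hy : x0 < y := by
      rw [hydef]; nlinarith [show (0:ℝ) < 1/(n+1) by positivity]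
    have hsub2 : Ioo 0 y ⊆ {x | lam < (G x).toReal} := by
      intro z hz
      have h2 : ENNReal.ofReal lam < G z := lt_of_lt_of_le hn (hGanti hz.2.le)
      exact (ENNReal.ofReal_lt_iff_lt_toReal hlam.le (hGfin z hz.1)).mp h2
    have hle : ENNReal.ofReal τ ≤ M := by
      calc ENNReal.ofReal τ ≤ U y := hUge y hy
      _ = ν (Ioo 0 y) := (hνIoo y).symm
      _ ≤ M := measure_mono hsub2
    exact (ENNReal.ofReal_le_iff_le_toReal hM).mp hle
  -- main computation
  have hA : ∫⁻ x in Ioi (0:ℝ), g x * U x ^ p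
      = ∫⁻ x, ENNReal.ofReal ((U x).toReal ^ p) ∂μg := by
    rw [hμgdef, lintegral_withDensity_eq_lintegral_mul _ hg
      (hUmeas.ennreal_toReal.pow_const p).ennreal_ofReal]
    refine lintegral_congr fun x => ?_
    simp only [Pi.mul_apply]
    rw [aux_ofReal_toReal_rpow (hUfin x) hp0.le]
  calc ∫⁻ x in Ioi (0:ℝ), g x * U x ^ p
      = ENNReal.ofReal p * ∫⁻ τ in Ioi (0:ℝ),
          μg {x | τ < (U x).toReal} * ENNReal.ofReal (τ ^ (p-1)) := by
        rw [hA, lintegral_rpow_eq_lintegral_meas_lt_mul μg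
          (Eventually.of_forall fun x => ENNReal.toReal_nonneg)
          hUmeas.ennreal_toReal.aemeasurable hp0]
  _ ≤ ENNReal.ofReal p * (T ^ (p-1) * ∫⁻ τ in Ioi (0:ℝ), H τ ^ r) := by
      refine mul_le_mul_right ?_ _
      have hbd : ∀ τ ∈ Ioi (0:ℝ),
          H τ * ENNReal.ofReal (τ ^ (p-1)) ≤ T ^ (p-1) * H τ ^ r := by
        intro τ hτ
        simp only [mem_Ioi] at hτ
        rcases eq_or_ne (H τ) 0 with h0 | hne
        · rw [h0, zero_mul]
          exact zero_le
        have hoτ0 : ENNReal.ofReal τ ≠ 0 := (ENNReal.ofReal_pos.mpr hτ).ne'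
        have h1 : H τ ^ r ≤ T / ENNReal.ofReal τ :=
          (ENNReal.le_div_iff_mul_le (Or.inl hoτ0) (Or.inl ENNReal.ofReal_ne_top)).mpr
            (lemA τ hτ)
        have h2 : H τ ≤ (T / ENNReal.ofReal τ) ^ p := by
          have h3 := ENNReal.rpow_le_rpow h1 hp0.le
          rwa [← ENNReal.rpow_mul, hrp, ENNReal.rpow_one] at h3
        have h3 : H τ = H τ ^ r * H τ ^ (1-r) := by
          rw [← ENNReal.rpow_add _ _ hne (hHfin τ)]
          norm_num
        have hexp : p * (1-r) = p - 1 := by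
          linear_combination -hrp
        have hoτrp : (ENNReal.ofReal τ) ^ (p-1) ≠ 0 := by
          simp [ENNReal.rpow_eq_zero_iff, hoτ0, ENNReal.ofReal_ne_top]
        have hoτrt : (ENNReal.ofReal τ) ^ (p-1) ≠ ∞ := by
          simp [ENNReal.rpow_eq_top_iff, hoτ0, ENNReal.ofReal_ne_top]
        calc H τ * ENNReal.ofReal (τ ^ (p-1))
            = H τ ^ r * H τ ^ (1-r) * (ENNReal.ofReal τ) ^ (p-1) := by
              rw [← h3, ENNReal.ofReal_rpow_of_pos hτ]
        _ ≤ H τ ^ r * ((T / ENNReal.ofReal τ) ^ p) ^ (1-r) * (ENNReal.ofReal τ) ^ (p-1) :=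
              mul_le_mul_left (mul_le_mul_right
                (ENNReal.rpow_le_rpow h2 (by linarith)) _) _
        _ = H τ ^ r * (T ^ (p-1) / (ENNReal.ofReal τ) ^ (p-1)) * (ENNReal.ofReal τ) ^ (p-1) := by
              rw [← ENNReal.rpow_mul, hexp, ENNReal.div_rpow_of_nonneg _ _ (by linarith [hp1] : (0:ℝ) ≤ p - 1)]
        _ = H τ ^ r * T ^ (p-1) := by
              rw [mul_assoc, ENNReal.div_mul_cancel hoτrp hoτrt]
        _ = T ^ (p-1) * H τ ^ r := mul_comm _ _
      calc ∫⁻ τ in Ioi (0:ℝ), H τ * ENNReal.ofReal (τ ^ (p-1))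
          ≤ ∫⁻ τ in Ioi (0:ℝ), T ^ (p-1) * H τ ^ r :=
            setLIntegral_mono (measurable_const.mul (hHmeas.pow_const r)) hbd
      _ = T ^ (p-1) * ∫⁻ τ in Ioi (0:ℝ), H τ ^ r :=
            lintegral_const_mul _ (hHmeas.pow_const r)
  _ ≤ ENNReal.ofReal p * (T ^ (p-1) * T) := by
      refine mul_le_mul_right (mul_le_mul_right lemB _) _
  _ = ENNReal.ofReal p * T ^ p := by
      rcases eq_or_ne T 0 with hT0 | hT0
      · rw [hT0, ENNReal.zero_rpow_of_pos (by linarith [hp1] : (0:ℝ) < p - 1), zero_mul,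
          ENNReal.zero_rpow_of_pos hp0]
      · congr 1
        have h6 : T ^ p = T ^ (p - 1) * T ^ (1:ℝ) := by
          rw [← ENNReal.rpow_add _ _ hT0 hTne]; norm_num
        rw [h6, ENNReal.rpow_one]

lemma aux_rpow_split {q : ℝ} (hq : 1 < q) (a : ℝ≥0∞) : a ^ q = a ^ (q-1) * a := by
  rcases eq_or_ne a 0 with rfl | h0
  · rw [ENNReal.zero_rpow_of_pos (by linarith), ENNReal.zero_rpow_of_pos (by linarith), mul_zero]
  rcases eq_or_ne a ∞ with rfl | ht
  · rw [ENNReal.top_rpow_of_pos (by linarith), ENNReal.top_rpow_of_pos (by linarith),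
      ENNReal.top_mul_top]
  conv_lhs => rw [show q = (q-1) + 1 by ring]
  rw [ENNReal.rpow_add _ _ h0 ht, ENNReal.rpow_one]

lemma aux_rpow_iSup {q : ℝ} (hq : 0 < q) (f : ℕ → ℝ≥0∞) :
    (⨆ n, f n) ^ q = ⨆ n, (f n) ^ q :=
  Monotone.map_iSup_of_continuousAt (f := fun x : ℝ≥0∞ => x ^ q) (g := f)
    ((ENNReal.continuous_rpow_const (y := q)).continuousAt)
    (fun a b hab => ENNReal.rpow_le_rpow hab hq.le)
    (by simp only [bot_eq_zero]; exact ENNReal.zero_rpow_of_pos hq)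

/-- the truncation of `g` at level `n`, supported in `(1/(n+1), n+1)`. -/
noncomputable def trunc (g : ℝ → ℝ≥0∞) (n : ℕ) : ℝ → ℝ≥0∞ :=
  (Ioo (1/(n+1):ℝ) (n+1:ℝ)).piecewise (fun x => min (g x) n) 0

lemma trunc_le (g : ℝ → ℝ≥0∞) (n : ℕ) (x : ℝ) : trunc g n x ≤ g x := by
  unfold trunc
  rcases Set.piecewise_eq_of_mem (Ioo (1/(n+1):ℝ) (n+1:ℝ)) _ _ (i := x) with h
  by_cases hx : x ∈ Ioo (1/(n+1):ℝ) (n+1:ℝ)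
  · rw [Set.piecewise_eq_of_mem _ _ _ hx]; exact min_le_left _ _
  · rw [Set.piecewise_eq_of_notMem _ _ _ hx]; exact zero_le

lemma trunc_le_coe (g : ℝ → ℝ≥0∞) (n : ℕ) (x : ℝ) : trunc g n x ≤ (n:ℝ≥0∞) := by
  unfold trunc
  by_cases hx : x ∈ Ioo (1/(n+1):ℝ) (n+1:ℝ)
  · rw [Set.piecewise_eq_of_mem _ _ _ hx]; exact min_le_right _ _
  · rw [Set.piecewise_eq_of_notMem _ _ _ hx]; exact zero_le

lemma trunc_zero_of_not_mem (g : ℝ → ℝ≥0∞) (n : ℕ) {x : ℝ}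
    (hx : x ∉ Ioo (1/(n+1):ℝ) (n+1:ℝ)) : trunc g n x = 0 :=
  Set.piecewise_eq_of_notMem _ _ _ hx

lemma trunc_measurable {g : ℝ → ℝ≥0∞} (hg : Measurable g) (n : ℕ) :
    Measurable (trunc g n) :=
  Measurable.piecewise measurableSet_Ioo (hg.min measurable_const) measurable_const

lemma trunc_mono {g : ℝ → ℝ≥0∞} {m n : ℕ} (hmn : m ≤ n) (x : ℝ) :
    trunc g m x ≤ trunc g n x := by
  have hsub : Ioo (1/(m+1):ℝ) (m+1:ℝ) ⊆ Ioo (1/(n+1):ℝ) (n+1:ℝ) := by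
    apply Ioo_subset_Ioo (aux_frac_anti hmn)
    have := (Nat.cast_le (α := ℝ)).mpr hmn
    linarith
  unfold trunc
  by_cases hx : x ∈ Ioo (1/(m+1):ℝ) (m+1:ℝ)
  · rw [Set.piecewise_eq_of_mem _ _ _ hx, Set.piecewise_eq_of_mem _ _ _ (hsub hx)]
    exact le_min (min_le_left _ _) (le_trans (min_le_right _ _)
      (by exact_mod_cast (Nat.cast_le (α := ℝ≥0∞)).mpr hmn))
  · rw [Set.piecewise_eq_of_notMem _ _ _ hx]; exact zero_le

lemma trunc_iSup {g : ℝ → ℝ≥0∞} {x : ℝ} (hx : 0 < x) : (⨆ n, trunc g n x) = g x := by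
  apply le_antisymm (iSup_le fun n => trunc_le g n x)
  obtain ⟨n0, hn0a⟩ := exists_nat_one_div_lt (show (0:ℝ) < x by exact hx)
  obtain ⟨n1, hn1⟩ := exists_nat_gt x
  have hmem : ∀ n : ℕ, n0 + n1 ≤ n → x ∈ Ioo (1/(n+1):ℝ) (n+1:ℝ) := by
    intro n hn
    have h1 : (1:ℝ)/(n+1) ≤ 1/(n0+1) := aux_frac_anti (le_trans (Nat.le_add_right _ _) hn)
    have h2 : (n1:ℝ) ≤ n := (Nat.cast_le (α := ℝ)).mpr (le_trans (Nat.le_add_left _ _) hn)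
    constructor
    · calc (1:ℝ)/(n+1) ≤ 1/(n0+1) := h1
      _ < x := by push_cast at hn0a ⊢; linarith
    · linarith
  have hval : ∀ n : ℕ, n0 + n1 ≤ n → trunc g n x = min (g x) n :=
    fun n hn => Set.piecewise_eq_of_mem _ _ _ (hmem n hn)
  rcases eq_or_ne (g x) ∞ with hgx | hgx
  · rw [hgx]
    have hle : ∀ n : ℕ, (n:ℝ≥0∞) ≤ ⨆ m, trunc g m x := by
      intro n
      calc (n:ℝ≥0∞) ≤ ((n0 + n1 + n : ℕ):ℝ≥0∞) := by
            exact_mod_cast Nat.le_add_left _ _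
      _ = min (g x) ((n0+n1+n : ℕ)) := by rw [hgx, min_eq_right le_top]
      _ = trunc g (n0+n1+n) x := (hval _ (by omega)).symm
      _ ≤ ⨆ m, trunc g m x := le_iSup (fun m => trunc g m x) _
    calc (∞:ℝ≥0∞) = ⨆ n : ℕ, (n:ℝ≥0∞) := ENNReal.iSup_natCast.symm
    _ ≤ ⨆ m, trunc g m x := iSup_le hle
  · obtain ⟨m, hm⟩ := ENNReal.exists_nat_gt hgx
    calc g x = min (g x) ((n0+n1+m : ℕ):ℝ≥0∞) := by
          rw [min_eq_left]
          push_cast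
          refine le_trans hm.le ?_
          exact_mod_cast le_add_self
    _ = trunc g (n0+n1+m) x := (hval _ (by omega)).symm
    _ ≤ ⨆ n, trunc g n x := le_iSup (fun n => trunc g n x) _

/-- The main upper-bound inequality for the embedding step:
`‖ t ↦ (∫_0^t g·ρ)·w(t) ‖_q ≤ (1/r) ‖ t ↦ (∫_t^∞ g)·u(t) ‖_r` where
`ρ = U^{1/r}/W`. -/
lemma S_est {r q : ℝ} (hr : 0 < r) (hr1 : r < 1) (hq1 : 1 < q)
    (u w g : ℝ → ℝ≥0∞) (hu : Measurable u) (hw : Measurable w) (hg : Measurable g)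
    (hUfin : ∀ x : ℝ, (∫⁻ σ in Ioo 0 x, u σ ^ r) ≠ ∞)
    (hWfin : ∀ x : ℝ, 0 < x → (∫⁻ σ in Ioi x, w σ ^ q) ≠ ∞)
    (hWpos : ∀ x : ℝ, 0 < x → (∫⁻ σ in Ioi x, w σ ^ q) ≠ 0) :
    (∫⁻ t in Ioi (0:ℝ),
        ((∫⁻ x in Ioo 0 t, g x * ((∫⁻ σ in Ioo 0 x, u σ ^ r) ^ (1/r) *
          ((∫⁻ σ in Ioi x, w σ ^ q) ^ (1/q))⁻¹)) * w t) ^ q) ^ (1/q)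
      ≤ ENNReal.ofReal (1/r) *
        (∫⁻ t in Ioi (0:ℝ), u t ^ r * (∫⁻ y in Ioi t, g y) ^ r) ^ (1/r) := by
  have hq0 : 0 < q := by linarith
  have hq0' : 0 < 1/q := by positivity
  set U : ℝ → ℝ≥0∞ := fun x => ∫⁻ σ in Ioo 0 x, u σ ^ r with hUdef
  set Wq : ℝ → ℝ≥0∞ := fun x => ∫⁻ σ in Ioi x, w σ ^ q with hWdef
  set ρ : ℝ → ℝ≥0∞ := fun x => U x ^ (1/r) * ((Wq x) ^ (1/q))⁻¹ with hρdef
  have hUmono : Monotone U := fun s t hst => lintegral_mono_set (Ioo_subset_Ioo le_rfl hst)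
  have hUmeas : Measurable U := hUmono.measurable
  have hWanti : Antitone Wq := fun s t hst => lintegral_mono_set (Ioi_subset_Ioi hst)
  have hWmeas : Measurable Wq := hWanti.measurable
  have hρmeas : Measurable ρ := (hUmeas.pow_const _).mul (hWmeas.pow_const _).inv
  set RHS : ℝ≥0∞ := ENNReal.ofReal (1/r) *
    (∫⁻ t in Ioi (0:ℝ), u t ^ r * (∫⁻ y in Ioi t, g y) ^ r) ^ (1/r) with hRHSdef
  set Fn : ℕ → ℝ → ℝ≥0∞ := fun n t => ∫⁻ x in Ioo 0 t, trunc g n x * ρ x with hFndef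
  set Sn : ℕ → ℝ≥0∞ := fun n => ∫⁻ t in Ioi (0:ℝ), (Fn n t * w t) ^ q with hSndef
  have hFnmono : ∀ n, Monotone (Fn n) := fun n s t hst =>
    lintegral_mono_set (Ioo_subset_Ioo le_rfl hst)
  have hFnmeas : ∀ n, Measurable (Fn n) := fun n => (hFnmono n).measurable
  have hFn_le : ∀ m n : ℕ, m ≤ n → ∀ t, Fn m t ≤ Fn n t := fun m n hmn t =>
    lintegral_mono (fun x => mul_le_mul_left (trunc_mono hmn x) _)
  -- monotone convergence
  have hFsup : ∀ t : ℝ, (∫⁻ x in Ioo 0 t, g x * ρ x) = ⨆ n, Fn n t := by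
    intro t
    have e1 : ∫⁻ x in Ioo 0 t, g x * ρ x = ∫⁻ x in Ioo 0 t, ⨆ n, trunc g n x * ρ x := by
      refine setLIntegral_congr_fun measurableSet_Ioo ?_
      intro x hx
      beta_reduce
      rw [← ENNReal.iSup_mul, trunc_iSup hx.1]
    rw [e1, lintegral_iSup (f := fun n x => trunc g n x * ρ x) (fun n => (trunc_measurable hg n).mul hρmeas)
      (fun m n hmn x => mul_le_mul_left (trunc_mono hmn x) _)]
  have hSsup : (∫⁻ t in Ioi (0:ℝ), ((∫⁻ x in Ioo 0 t, g x * ρ x) * w t) ^ q) = ⨆ n, Sn n := by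
    have e1 : ∀ t, ((∫⁻ x in Ioo 0 t, g x * ρ x) * w t) ^ q = ⨆ n, (Fn n t * w t) ^ q := by
      intro t
      rw [hFsup t, ENNReal.iSup_mul, aux_rpow_iSup hq0]
    simp_rw [e1]
    exact lintegral_iSup
      (fun n => (((hFnmeas n).mul hw).pow_const q))
      (fun m n hmn t => ENNReal.rpow_le_rpow (mul_le_mul_left (hFn_le m n hmn t) _) hq0.le)
  -- per-n estimate
  have per_n : ∀ n : ℕ, (Sn n) ^ (1/q) ≤ RHS := by
    intro n
    set a : ℝ := 1/(n+1) with hadef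
    set b : ℝ := (n+1:ℝ) with hbdef
    have ha0 : 0 < a := by rw [hadef]; positivity
    have hb0 : 0 < b := by rw [hbdef]; positivity
    -- finiteness of Sn n
    set Bb : ℝ≥0∞ := U b ^ (1/r) * ((Wq b) ^ (1/q))⁻¹ with hBbdef
    have hWbrpow : (Wq b) ^ (1/q) ≠ 0 := by
      simp only [ne_eq, ENNReal.rpow_eq_zero_iff, not_or, not_and, not_lt]
      constructor
      · intro h; exact absurd h (hWpos b hb0)
      · intro h; exact absurd h (hWfin b hb0)
    have hBbfin : Bb ≠ ∞ := by
      refine ENNReal.mul_ne_top (ENNReal.rpow_ne_top_of_nonneg (by positivity) (hUfin b)) ?_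
      rw [ENNReal.inv_ne_top]
      exact hWbrpow
    have hρ_bd : ∀ x ∈ Ioo a b, ρ x ≤ Bb := by
      intro x hx
      refine mul_le_mul' (ENNReal.rpow_le_rpow (hUmono hx.2.le) (by positivity)) ?_
      rw [ENNReal.inv_le_inv]
      exact ENNReal.rpow_le_rpow (hWanti hx.2.le) (by positivity)
    set Mn : ℝ≥0∞ := ((n:ℝ≥0∞) * Bb) * volume (Ioo a b) with hMndef
    have hMnfin : Mn ≠ ∞ := by
      refine ENNReal.mul_ne_top (ENNReal.mul_ne_top (ENNReal.natCast_ne_top n) hBbfin) ?_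
      rw [Real.volume_Ioo]
      exact ENNReal.ofReal_ne_top
    have hFn_bd : ∀ t, Fn n t ≤ Mn := by
      intro t
      have e1 : Fn n t ≤ ∫⁻ x in Ioo 0 t,
          (Ioo a b).indicator (fun _ => (n:ℝ≥0∞) * Bb) x := by
        refine setLIntegral_mono' measurableSet_Ioo ?_
        intro x hx
        by_cases hxab : x ∈ Ioo a b
        · rw [Set.indicator_of_mem hxab]
          exact mul_le_mul' (trunc_le_coe g n x) (hρ_bd x hxab)
        · rw [Set.indicator_of_notMem hxab, trunc_zero_of_not_mem g n hxab, zero_mul]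
      refine le_trans e1 (le_trans (setLIntegral_le_lintegral _ _) ?_)
      rw [lintegral_indicator measurableSet_Ioo, setLIntegral_const]
    have hFn_zero : ∀ t : ℝ, t ≤ a → Fn n t = 0 := by
      intro t hta
      have e1 : ∀ x ∈ Ioo (0:ℝ) t, trunc g n x * ρ x = 0 := by
        intro x hx
        rw [trunc_zero_of_not_mem g n, zero_mul]
        intro hmem
        exact absurd (hmem.1.trans (hx.2.trans_le hta)) (lt_irrefl a)
      rw [hFndef]
      simp only
      rw [setLIntegral_congr_fun measurableSet_Ioo e1, lintegral_zero]
    have hSnfin : Sn n ≠ ∞ := by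
      have e1 : Sn n ≤ ∫⁻ t in Ioi (0:ℝ), (Ioi a).indicator (fun t => (Mn * w t)^q) t := by
        refine setLIntegral_mono' measurableSet_Ioi ?_
        intro t _
        rcases le_or_gt t a with hta | hat
        · rw [hFn_zero t hta, zero_mul, ENNReal.zero_rpow_of_pos hq0]
          exact zero_le
        · rw [Set.indicator_of_mem (mem_Ioi.mpr hat)]
          exact ENNReal.rpow_le_rpow (mul_le_mul_left (hFn_bd t) _) hq0.le
      have e2 : ∫⁻ t in Ioi (0:ℝ), (Ioi a).indicator (fun t => (Mn * w t)^q) t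
          = Mn ^ q * Wq a := by
        rw [lintegral_indicator measurableSet_Ioi,
          Measure.restrict_restrict measurableSet_Ioi,
          inter_eq_left.mpr (Ioi_subset_Ioi ha0.le)]
        have e3 : ∀ t, (Mn * w t) ^ q = Mn ^ q * w t ^ q := fun t =>
          ENNReal.mul_rpow_of_nonneg _ _ hq0.le
        simp_rw [e3]
        rw [lintegral_const_mul _ (hw.pow_const q)]
      refine ne_top_of_le_ne_top ?_ (e1.trans_eq e2)
      exact ENNReal.mul_ne_top (ENNReal.rpow_ne_top_of_nonneg hq0.le hMnfin) (hWfin a ha0)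
    rcases eq_or_ne (Sn n) 0 with hSn0 | hSn0
    · rw [hSn0, ENNReal.zero_rpow_of_pos hq0']
      exact zero_le
    -- duality
    set h : ℝ → ℝ≥0∞ := fun t => (Fn n t * w t) ^ (q-1) with hhdef
    have hhmeas : Measurable h := ((hFnmeas n).mul hw).pow_const _
    set q' : ℝ := Real.conjExponent q with hq'def
    have hconj : q.HolderConjugate q' := Real.HolderConjugate.conjExponent hq1
    have hq1' : q - 1 ≠ 0 := by linarith
    have hq'pos : 0 < q' := hconj.symm.pos
    have hq'inv : (0:ℝ) < 1/q' := by positivity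
    have hq'eq : (q-1) * q' = q := by
      rw [hq'def, Real.conjExponent]
      field_simp
    have step1 : Sn n = ∫⁻ t in Ioi (0:ℝ), (h t * w t) * Fn n t := by
      refine lintegral_congr fun t => ?_
      rw [aux_rpow_split hq1 (Fn n t * w t), hhdef]
      ring
    have hset : MeasurableSet {p : ℝ × ℝ | p.2 ∈ Ioo 0 p.1} := by
      have : {p : ℝ × ℝ | p.2 ∈ Ioo 0 p.1}
          = {p : ℝ × ℝ | 0 < p.2} ∩ {p : ℝ × ℝ | p.2 < p.1} := by
        ext p; simp [mem_Ioo]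
      rw [this]
      exact (measurableSet_lt measurable_const measurable_snd).inter
        (measurableSet_lt measurable_snd measurable_fst)
    have hΨmeas : AEMeasurable
        (Function.uncurry fun t x => (h t * w t) *
          ((Ioo (0:ℝ) t).indicator (fun x' => trunc g n x' * ρ x') x))
        ((volume.restrict (Ioi (0:ℝ))).prod (volume.restrict (Ioi (0:ℝ)))) := by
      have e1 : (Function.uncurry fun t x => (h t * w t) *
          ((Ioo (0:ℝ) t).indicator (fun x' => trunc g n x' * ρ x') x))
          = fun p : ℝ × ℝ => (h p.1 * w p.1) *
            (if p.2 ∈ Ioo 0 p.1 then trunc g n p.2 * ρ p.2 else 0) := by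
        funext p
        simp [Function.uncurry, Set.indicator_apply]
      rw [e1]
      exact (((hhmeas.comp measurable_fst).mul (hw.comp measurable_fst)).mul
        (Measurable.ite hset (((trunc_measurable hg n).mul hρmeas).comp measurable_snd)
          measurable_const)).aemeasurable
    have step2 : ∫⁻ t in Ioi (0:ℝ), (h t * w t) * Fn n t
        = ∫⁻ x in Ioi (0:ℝ), (trunc g n x * ρ x) * (∫⁻ t in Ioi x, h t * w t) := by
      have e1 : ∀ t ∈ Ioi (0:ℝ), (h t * w t) * Fn n t = ∫⁻ x in Ioi (0:ℝ),
          (h t * w t) * ((Ioo (0:ℝ) t).indicator (fun x' => trunc g n x' * ρ x') x) := by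
        intro t _
        rw [lintegral_const_mul (f := (Ioo (0:ℝ) t).indicator (fun x' => trunc g n x' * ρ x')) _ (((trunc_measurable hg n).mul hρmeas).indicator
          measurableSet_Ioo)]
        congr 1
        rw [lintegral_indicator measurableSet_Ioo,
          Measure.restrict_restrict measurableSet_Ioo,
          inter_eq_left.mpr Ioo_subset_Ioi_self]
      rw [setLIntegral_congr_fun measurableSet_Ioi e1,
        lintegral_lintegral_swap hΨmeas]
      refine setLIntegral_congr_fun measurableSet_Ioi ?_
      intro x hx
      have e2 : ∀ t, (h t * w t) * ((Ioo (0:ℝ) t).indicator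
          (fun x' => trunc g n x' * ρ x') x)
          = (Ioi x).indicator (fun t => (h t * w t) * (trunc g n x * ρ x)) t := by
        intro t
        by_cases hxt : x < t
        · rw [Set.indicator_of_mem (mem_Ioo.mpr ⟨hx, hxt⟩),
            Set.indicator_of_mem (mem_Ioi.mpr hxt)]
        · rw [Set.indicator_of_notMem (fun hmem => hxt hmem.2),
            Set.indicator_of_notMem (by simpa [mem_Ioi] using hxt), mul_zero]
      simp_rw [e2]
      rw [lintegral_indicator measurableSet_Ioi,
        Measure.restrict_restrict measurableSet_Ioi,
        inter_eq_left.mpr (Ioi_subset_Ioi (mem_Ioi.mp hx).le),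
        lintegral_mul_const (f := fun t => h t * w t) _ (hhmeas.mul hw)]
      exact mul_comm _ _
    have step3 : ∀ x : ℝ, 0 < x →
        (∫⁻ t in Ioi x, h t * w t) ≤ (Wq x) ^ (1/q) * (Sn n) ^ (1/q') := by
      intro x hx
      have e1 : ∫⁻ t in Ioi x, h t * w t = ∫⁻ t, (w * h) t ∂(volume.restrict (Ioi x)) :=
        lintegral_congr fun t => mul_comm _ _
      have e2 := ENNReal.lintegral_mul_le_Lp_mul_Lq (volume.restrict (Ioi x)) hconj
        hw.aemeasurable hhmeas.aemeasurable
      rw [e1]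
      refine le_trans e2 (mul_le_mul' le_rfl ?_)
      have e3 : ∀ t, h t ^ q' = (Fn n t * w t) ^ q := by
        intro t
        rw [hhdef]
        simp only
        rw [← ENNReal.rpow_mul, hq'eq]
      refine ENNReal.rpow_le_rpow ?_ hq'inv.le
      calc ∫⁻ t, h t ^ q' ∂(volume.restrict (Ioi x))
          = ∫⁻ t in Ioi x, (Fn n t * w t) ^ q := lintegral_congr fun t => e3 t
      _ ≤ Sn n := lintegral_mono_set (Ioi_subset_Ioi hx.le)
    have step4 : Sn n ≤ (∫⁻ x in Ioi (0:ℝ), trunc g n x * U x ^ (1/r)) * (Sn n) ^ (1/q') := by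
      calc Sn n = ∫⁻ x in Ioi (0:ℝ), (trunc g n x * ρ x) * (∫⁻ t in Ioi x, h t * w t) := by
            rw [step1, step2]
      _ ≤ ∫⁻ x in Ioi (0:ℝ), (trunc g n x * U x ^ (1/r)) * (Sn n) ^ (1/q') := by
            refine setLIntegral_mono' measurableSet_Ioi ?_
            intro x hx
            calc (trunc g n x * ρ x) * (∫⁻ t in Ioi x, h t * w t)
                ≤ (trunc g n x * ρ x) * ((Wq x) ^ (1/q) * (Sn n) ^ (1/q')) :=
                  mul_le_mul_right (step3 x (mem_Ioi.mp hx)) _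
            _ = (trunc g n x * (ρ x * (Wq x) ^ (1/q))) * (Sn n) ^ (1/q') := by ring
            _ ≤ (trunc g n x * U x ^ (1/r)) * (Sn n) ^ (1/q') := by
                refine mul_le_mul_left (mul_le_mul_right ?_ _) _
                rw [hρdef]
                simp only
                rw [mul_assoc]
                calc U x ^ (1/r) * (((Wq x) ^ (1/q))⁻¹ * (Wq x) ^ (1/q))
                    ≤ U x ^ (1/r) * 1 := mul_le_mul_right (aux_inv_mul_le_one _) _
                _ = U x ^ (1/r) := mul_one _
      _ = (∫⁻ x in Ioi (0:ℝ), trunc g n x * U x ^ (1/r)) * (Sn n) ^ (1/q') :=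
            lintegral_mul_const _ ((trunc_measurable hg n).mul (hUmeas.pow_const _))
    have htrfin : (∫⁻ y in Ioi (0:ℝ), trunc g n y) ≠ ∞ := by
      have e1 : ∫⁻ y in Ioi (0:ℝ), trunc g n y
          ≤ ∫⁻ y, (Ioo a b).indicator (fun _ => (n:ℝ≥0∞)) y := by
        refine le_trans (setLIntegral_le_lintegral _ _) (lintegral_mono ?_)
        intro y
        by_cases hy : y ∈ Ioo a b
        · rw [Set.indicator_of_mem hy]; exact trunc_le_coe g n y
        · rw [Set.indicator_of_notMem hy, trunc_zero_of_not_mem g n hy]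
      rw [lintegral_indicator measurableSet_Ioo, setLIntegral_const] at e1
      refine ne_top_of_le_ne_top ?_ e1
      refine ENNReal.mul_ne_top (ENNReal.natCast_ne_top n) ?_
      rw [Real.volume_Ioo]
      exact ENNReal.ofReal_ne_top
    have step5 : (∫⁻ x in Ioi (0:ℝ), trunc g n x * U x ^ (1/r)) ≤ RHS := by
      refine le_trans (key_est hr hr1 u (trunc g n) hu (trunc_measurable hg n) hUfin htrfin) ?_
      rw [hRHSdef]
      refine mul_le_mul_right (ENNReal.rpow_le_rpow ?_ (by positivity)) _
      refine lintegral_mono fun t => mul_le_mul_right ?_ _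
      exact ENNReal.rpow_le_rpow (lintegral_mono fun y => trunc_le g n y) hr.le
    -- cancellation
    have hcanc : Sn n ^ (1/q) * Sn n ^ (1/q') ≤ RHS * Sn n ^ (1/q') := by
      have e1 : Sn n ^ (1/q) * Sn n ^ (1/q') = Sn n := by
        rw [← ENNReal.rpow_add _ _ hSn0 hSnfin]
        rw [show 1/q + 1/q' = 1 by
          have := hconj.inv_add_inv_eq_one
          rw [one_div, one_div]
          linarith, ENNReal.rpow_one]
      rw [e1]
      exact le_trans step4 (mul_le_mul_left step5 _)
    have hSq' : Sn n ^ (1/q') ≠ 0 := by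
      simp only [ne_eq, ENNReal.rpow_eq_zero_iff, not_or, not_and, not_lt]
      constructor
      · intro hc; exact absurd hc hSn0
      · intro hc; exact absurd hc hSnfin
    have hSq'2 : Sn n ^ (1/q') ≠ ∞ := ENNReal.rpow_ne_top_of_nonneg hq'inv.le hSnfin
    exact (ENNReal.mul_le_mul_iff_left hSq' hSq'2).mp hcanc
  rw [hSsup, aux_rpow_iSup hq0' Sn]
  exact iSup_le per_n

lemma wNorm_one (f : ℝ → ℝ≥0∞) (s : Set ℝ) : wNorm 1 f s = ∫⁻ x in s, f x := by
  rw [wNorm, if_neg (by simp : ¬(1:ℝ≥0∞) = ∞)]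
  simp [ENNReal.rpow_one]

lemma wNorm_ofReal {p : ℝ} (hp : 0 < p) (f : ℝ → ℝ≥0∞) (s : Set ℝ) :
    wNorm (ENNReal.ofReal p) f s = (∫⁻ x in s, f x ^ p) ^ (1/p) := by
  rw [wNorm, if_neg ENNReal.ofReal_ne_top, ENNReal.toReal_ofReal hp.le]

/-- Theorem 3.6: for `0 < r < 1 < q < ∞`,
`‖f‖_{M(Cop_r(u), Ces_{1,q}(w,v))}
  ≈ esssup_{x>0} f(x) v(x) (∫_0^x u^r)^{−1/r} (∫_x^∞ w^q)^{1/q}`,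
with constants depending only on `q` and `r`. -/
theorem multiplier_r_lt_p_eq_one_lt_q (q r : ℝ) (hr : 0 < r) (hr1 : r < 1)
    (hq1 : 1 < q) :
    ∃ c C : ℝ≥0∞, 0 < c ∧ c < ∞ ∧ 0 < C ∧ C < ∞ ∧
      ∀ u v w : ℝ → ℝ≥0∞, IsWeightOn v → MemOmegaDual (ENNReal.ofReal r) u →
        MemOmega (ENNReal.ofReal q) w →
        ∀ f : ℝ → ℝ≥0∞, Measurable f →
          let lhs := multNorm (copsonNorm 1 (ENNReal.ofReal r) u (fun _ => 1))
            (cesaroNorm 1 (ENNReal.ofReal q) w v) f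
          let rhs := essSup (fun x => f x * v x *
              (∫⁻ σ in Ioo (0:ℝ) x, u σ ^ r) ^ (-(1 / r)) *
              (∫⁻ σ in Ioi x, w σ ^ q) ^ (1 / q))
            (volume.restrict (Ioi (0:ℝ)))
          c * rhs ≤ lhs ∧ lhs ≤ C * rhs := by
  have hq0 : 0 < q := by linarith
  have hq0' : 0 < 1/q := by positivity
  have hp0 : 0 < 1/r := by positivity
  refine ⟨1, ENNReal.ofReal (1/r), zero_lt_one, ENNReal.one_lt_top,
    ENNReal.ofReal_pos.mpr hp0, ENNReal.ofReal_lt_top, ?_⟩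
  intro u v w hv hu hw f hf
  intro lhs rhs
  obtain ⟨humeas, huprop⟩ := hu
  obtain ⟨hwmeas, hwprop⟩ := hw
  obtain ⟨hvmeas, -⟩ := hv
  set U : ℝ → ℝ≥0∞ := fun x => ∫⁻ σ in Ioo 0 x, u σ ^ r with hUdef
  set Wq : ℝ → ℝ≥0∞ := fun x => ∫⁻ σ in Ioi x, w σ ^ q with hWdef
  have hUmono : Monotone U := fun s t hst => lintegral_mono_set (Ioo_subset_Ioo le_rfl hst)
  have hUmeas : Measurable U := hUmono.measurable
  have hWanti : Antitone Wq := fun s t hst => lintegral_mono_set (Ioi_subset_Ioi hst)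
  have hWmeas : Measurable Wq := hWanti.measurable
  have hUprop : ∀ t : ℝ, 0 < t → U t ≠ 0 ∧ U t ≠ ∞ := by
    intro t ht
    obtain ⟨h1, h2⟩ := huprop t ht
    rw [wNorm_ofReal hr] at h1 h2
    constructor
    · intro hc
      rw [show (∫⁻ x in Ioo (0:ℝ) t, u x ^ r) = (0:ℝ≥0∞) from hc,
        ENNReal.zero_rpow_of_pos hp0] at h1
      exact lt_irrefl _ h1
    · intro hc
      rw [show (∫⁻ x in Ioo (0:ℝ) t, u x ^ r) = (∞:ℝ≥0∞) from hc,
        ENNReal.top_rpow_of_pos hp0] at h2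
      exact lt_irrefl _ h2
  have hWprop : ∀ t : ℝ, 0 < t → Wq t ≠ 0 ∧ Wq t ≠ ∞ := by
    intro t ht
    obtain ⟨h1, h2⟩ := hwprop t ht
    rw [wNorm_ofReal hq0] at h1 h2
    constructor
    · intro hc
      rw [show (∫⁻ x in Ioi t, w x ^ q) = (0:ℝ≥0∞) from hc,
        ENNReal.zero_rpow_of_pos hq0'] at h1
      exact lt_irrefl _ h1
    · intro hc
      rw [show (∫⁻ x in Ioi t, w x ^ q) = (∞:ℝ≥0∞) from hc,
        ENNReal.top_rpow_of_pos hq0'] at h2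
      exact lt_irrefl _ h2
  have hUfin : ∀ x : ℝ, U x ≠ ∞ := by
    intro x
    rcases le_or_gt x 0 with hx | hx
    · have he : Ioo (0:ℝ) x = ∅ := Ioo_eq_empty (by linarith)
      rw [hUdef]
      simp only [he, Measure.restrict_empty, lintegral_zero_measure]
      exact ENNReal.zero_ne_top
    · exact (hUprop x hx).2
  have hUrprop : ∀ x : ℝ, 0 < x → U x ^ (1/r) ≠ 0 ∧ U x ^ (1/r) ≠ ∞ := by
    intro x hx
    constructor
    · simp only [ne_eq, ENNReal.rpow_eq_zero_iff, not_or, not_and, not_lt]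
      exact ⟨fun hc => absurd hc (hUprop x hx).1, fun hc => absurd hc (hUprop x hx).2⟩
    · exact ENNReal.rpow_ne_top_of_nonneg hp0.le (hUprop x hx).2
  have hWrprop : ∀ x : ℝ, 0 < x → Wq x ^ (1/q) ≠ 0 ∧ Wq x ^ (1/q) ≠ ∞ := by
    intro x hx
    constructor
    · simp only [ne_eq, ENNReal.rpow_eq_zero_iff, not_or, not_and, not_lt]
      exact ⟨fun hc => absurd hc (hWprop x hx).1, fun hc => absurd hc (hWprop x hx).2⟩
    · exact ENNReal.rpow_ne_top_of_nonneg hq0'.le (hWprop x hx).2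
  set Φ : ℝ → ℝ≥0∞ := fun x => f x * v x * U x ^ (-(1/r)) * Wq x ^ (1/q) with hΦdef
  have hΦmeas : Measurable Φ :=
    (((hf.mul hvmeas).mul (hUmeas.pow_const _)).mul (hWmeas.pow_const _))
  have hrhs : rhs = essSup Φ (volume.restrict (Ioi (0:ℝ))) := rfl
  have hlhs : lhs = multNorm (copsonNorm 1 (ENNReal.ofReal r) u (fun _ => 1))
      (cesaroNorm 1 (ENNReal.ofReal q) w v) f := rfl
  have hfveq : ∀ x : ℝ, 0 < x →
      f x * v x = Φ x * (U x ^ (1/r) * (Wq x ^ (1/q))⁻¹) := by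
    intro x hx
    have hU1 : (U x ^ (1/r))⁻¹ * U x ^ (1/r) = 1 :=
      ENNReal.inv_mul_cancel (hUrprop x hx).1 (hUrprop x hx).2
    have hW1 : Wq x ^ (1/q) * (Wq x ^ (1/q))⁻¹ = 1 :=
      ENNReal.mul_inv_cancel (hWrprop x hx).1 (hWrprop x hx).2
    rw [hΦdef]
    simp only
    rw [ENNReal.rpow_neg]
    calc f x * v x
        = f x * v x * (((U x ^ (1/r))⁻¹ * U x ^ (1/r)) * (Wq x ^ (1/q) * (Wq x ^ (1/q))⁻¹)) := by
          rw [hU1, hW1, one_mul, mul_one]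
    _ = f x * v x * (U x ^ (1/r))⁻¹ * Wq x ^ (1/q) * (U x ^ (1/r) * (Wq x ^ (1/q))⁻¹) := by
          ring
  have hX : ∀ g : ℝ → ℝ≥0∞, copsonNorm 1 (ENNReal.ofReal r) u (fun _ => 1) g
      = (∫⁻ t in Ioi (0:ℝ), u t ^ r * (∫⁻ y in Ioi t, g y) ^ r) ^ (1/r) := by
    intro g
    rw [copsonNorm, wNorm_ofReal hr]
    congr 1
    refine lintegral_congr fun t => ?_
    rw [wNorm_one]
    simp_rw [mul_one]
    rw [ENNReal.mul_rpow_of_nonneg _ _ hr.le, mul_comm]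
  have hY : ∀ g : ℝ → ℝ≥0∞, cesaroNorm 1 (ENNReal.ofReal q) w v (fun x => f x * g x)
      = (∫⁻ t in Ioi (0:ℝ), ((∫⁻ x in Ioo 0 t, f x * g x * v x) * w t) ^ q) ^ (1/q) := by
    intro g
    rw [cesaroNorm, wNorm_ofReal hq0]
    congr 1
    exact lintegral_congr fun t => by rw [wNorm_one]
  constructor
  · -- LOWER BOUND
    rw [one_mul]
    by_contra hcon
    push_neg at hcon
    obtain ⟨lam, hlam1, hlam2⟩ := exists_between hcon
    obtain ⟨lam2, hl2a, hl2b⟩ := exists_between hlam2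
    have hlam0 : lam ≠ 0 := (lt_of_le_of_lt (zero_le (a := lhs)) hlam1).ne'
    have hlamtop : lam ≠ ∞ := hl2a.ne_top
    set Aset : Set ℝ := Ioi 0 ∩ {x | lam2 < Φ x} with hAdef
    have hAmeas : MeasurableSet Aset :=
      measurableSet_Ioi.inter (measurableSet_lt measurable_const hΦmeas)
    have hApos : volume Aset ≠ 0 := by
      intro h0
      have hae : ∀ᵐ x ∂(volume.restrict (Ioi (0:ℝ))), Φ x ≤ lam2 := by
        rw [ae_iff, Measure.restrict_apply' measurableSet_Ioi]
        refine measure_mono_null ?_ h0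
        intro x hx
        obtain ⟨hx1, hx2⟩ := hx
        exact ⟨hx2, not_le.mp hx1⟩
      have hcon2 : rhs ≤ lam2 := by rw [hrhs]; exact essSup_le_of_ae_le lam2 hae
      exact absurd hl2b (not_lt.mpr hcon2)
    obtain ⟨x₀, hx₀A, hx₀⟩ := exists_mem_forall_mem_nhdsWithin_pos_measure hApos
    have hx₀pos : 0 < x₀ := hx₀A.1
    set νu : Measure ℝ := (volume.restrict (Ioi (0:ℝ))).withDensity (fun t => u t ^ r)
      with hνudef
    set νw : Measure ℝ := (volume.restrict (Ioi (x₀/2))).withDensity (fun t => w t ^ q)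
      with hνwdef
    have hνuIio : ∀ y : ℝ, νu (Iio y) = U y := by
      intro y
      rw [hνudef, withDensity_apply _ measurableSet_Iio,
        Measure.restrict_restrict measurableSet_Iio]
      have he : Iio y ∩ Ioi 0 = Ioo 0 y := by ext z; simp [mem_Ioo, and_comm]
      rw [he]
    have hνwIoi : ∀ y : ℝ, x₀/2 ≤ y → νw (Ioi y) = Wq y := by
      intro y hy
      rw [hνwdef, withDensity_apply _ measurableSet_Ioi,
        Measure.restrict_restrict measurableSet_Ioi,
        inter_eq_left.mpr (Ioi_subset_Ioi hy)]
    have hνu0 : νu {x₀} = 0 := by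
      rw [hνudef, withDensity_apply _ (measurableSet_singleton _)]
      refine setLIntegral_measure_zero _ _ ?_
      rw [Measure.restrict_apply' measurableSet_Ioi]
      exact measure_mono_null inter_subset_left (measure_singleton x₀)
    have hνw0 : νw {x₀} = 0 := by
      rw [hνwdef, withDensity_apply _ (measurableSet_singleton _)]
      refine setLIntegral_measure_zero _ _ ?_
      rw [Measure.restrict_apply' measurableSet_Ioi]
      exact measure_mono_null inter_subset_left (measure_singleton x₀)
    have hIccanti : Antitone (fun n : ℕ => Icc (x₀ - 1/(n+1):ℝ) (x₀ + 1/(n+1))) := by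
      intro m n hmn
      have hf := aux_frac_anti hmn
      exact Icc_subset_Icc (by linarith) (by linarith)
    have hIccsub : ∀ n : ℕ, Icc (x₀ - 1/(n+1):ℝ) (x₀ + 1/(n+1)) ⊆ Iio (x₀ + 2) := by
      intro n z hz
      have h1 : (1:ℝ)/(n+1) ≤ 1 := by
        have := aux_frac_anti (Nat.zero_le n)
        simpa using this
      have := hz.2
      simp only [mem_Iio]
      linarith
    have hηu : Tendsto (fun n : ℕ => νu (Icc (x₀ - 1/(n+1)) (x₀ + 1/(n+1)))) atTop (𝓝 0) := by
      have h := tendsto_measure_iInter_atTop (μ := νu)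
        (fun n => measurableSet_Icc.nullMeasurableSet) hIccanti
        ⟨0, ne_top_of_le_ne_top (by rw [hνuIio]; exact hUfin _) (measure_mono (hIccsub 0))⟩
      rw [aux_iInter_Icc x₀, hνu0] at h
      exact h
    have hηw : Tendsto (fun n : ℕ => νw (Icc (x₀ - 1/(n+1)) (x₀ + 1/(n+1)))) atTop (𝓝 0) := by
      have hνwfin : ∀ s : Set ℝ, νw s ≠ ∞ := by
        intro s
        refine ne_top_of_le_ne_top ?_ (measure_mono (subset_univ s))
        rw [hνwdef, withDensity_apply _ MeasurableSet.univ, Measure.restrict_univ]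
        exact (hWprop (x₀/2) (by linarith)).2
      have h := tendsto_measure_iInter_atTop (μ := νw)
        (fun n => measurableSet_Icc.nullMeasurableSet) hIccanti ⟨0, hνwfin _⟩
      rw [aux_iInter_Icc x₀, hνw0] at h
      exact h
    -- choose ε
    set sexp : ℝ := 1/r + 1/q with hsdef
    have hs0 : 0 < sexp := by rw [hsdef]; positivity
    have hdgt : 1 < lam2 / lam := by
      rw [ENNReal.lt_div_iff_mul_lt (Or.inl hlam0) (Or.inl hlamtop), one_mul]
      exact hl2a
    have hd1 : 1 < (lam2 / lam) ^ (1/sexp) := ENNReal.one_lt_rpow hdgt (by positivity)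
    set ε : ℝ≥0∞ := min ((lam2 / lam) ^ (1/sexp) - 1) 1 with hεdef
    have hε0 : ε ≠ 0 := (lt_min (tsub_pos_of_lt hd1) zero_lt_one).ne'
    have hεtop : ε ≠ ∞ := ((min_le_right _ _).trans_lt ENNReal.one_lt_top).ne
    have h1ε0 : (1:ℝ≥0∞) + ε ≠ 0 := by simp
    have h1εtop : (1:ℝ≥0∞) + ε ≠ ∞ := by
      rw [ENNReal.add_ne_top]
      exact ⟨ENNReal.one_ne_top, hεtop⟩
    have hεle : lam * (1+ε) ^ sexp ≤ lam2 := by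
      have h1 : (1:ℝ≥0∞) + ε ≤ (lam2 / lam) ^ (1/sexp) := by
        calc (1:ℝ≥0∞) + ε ≤ 1 + ((lam2 / lam) ^ (1/sexp) - 1) :=
              add_le_add_right (min_le_left _ _) _
        _ = (lam2 / lam) ^ (1/sexp) := add_tsub_cancel_of_le hd1.le
      calc lam * (1+ε) ^ sexp ≤ lam * ((lam2 / lam) ^ (1/sexp)) ^ sexp :=
            mul_le_mul_right (ENNReal.rpow_le_rpow h1 hs0.le) _
      _ = lam * (lam2 / lam) := by
          rw [← ENNReal.rpow_mul, one_div_mul_cancel hs0.ne', ENNReal.rpow_one]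
      _ = lam2 := ENNReal.mul_div_cancel hlam0 hlamtop
    -- choose n
    have hUhalf := hUprop (x₀/2) (by linarith)
    have hWx1 := hWprop (x₀+1) (by linarith)
    have hev1 : ∀ᶠ n : ℕ in atTop,
        νu (Icc (x₀ - 1/(n+1)) (x₀ + 1/(n+1))) < ε * U (x₀/2) :=
      hηu.eventually (eventually_lt_nhds
        (ENNReal.mul_pos hε0 hUhalf.1))
    have hev2 : ∀ᶠ n : ℕ in atTop,
        νw (Icc (x₀ - 1/(n+1)) (x₀ + 1/(n+1))) < ε * Wq (x₀+1) :=
      hηw.eventually (eventually_lt_nhds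
        (ENNReal.mul_pos hε0 hWx1.1))
    have hev3 : ∀ᶠ n : ℕ in atTop, 1/((n:ℝ)+1) < x₀/2 := by
      obtain ⟨n₂, hn₂⟩ := exists_nat_one_div_lt (show (0:ℝ) < x₀/2 by linarith)
      refine eventually_atTop.mpr ⟨n₂, fun n hn => lt_of_le_of_lt (aux_frac_anti hn) ?_⟩
      exact_mod_cast hn₂
    obtain ⟨n, ⟨hn1, hn2⟩, hn3⟩ := ((hev1.and hev2).and hev3).exists
    set δ : ℝ := 1/(n+1) with hδdef
    have hδ0 : 0 < δ := by rw [hδdef]; positivity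
    have hδ1 : δ ≤ 1 := by
      have := aux_frac_anti (Nat.zero_le n)
      rw [hδdef]
      simpa using this
    set a : ℝ := x₀ - δ with hadef2
    set b : ℝ := x₀ + δ with hbdef2
    have ha2 : x₀/2 ≤ a := by rw [hadef2]; linarith
    have ha0 : 0 < a := by linarith
    have hab : a < b := by rw [hadef2, hbdef2]; linarith
    have hb0 : 0 < b := by linarith
    have hb1 : b ≤ x₀ + 1 := by rw [hbdef2]; linarith
    -- continuity estimates
    have hU2 : U b ≤ (1+ε) * U a := by
      have hsplit : νu (Iio b) = νu (Iio a) + νu (Ico a b) := by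
        rw [← Iio_union_Ico_eq_Iio hab.le,
          measure_union ((Iio_disjoint_Ici le_rfl).mono_right Ico_subset_Ici_self)
            measurableSet_Ico]
      calc U b = νu (Iio b) := (hνuIio b).symm
      _ = νu (Iio a) + νu (Ico a b) := hsplit
      _ ≤ U a + νu (Icc (x₀ - δ) (x₀ + δ)) := by
          rw [hνuIio a]
          exact add_le_add_right (measure_mono Ico_subset_Icc_self) _
      _ ≤ U a + ε * U (x₀/2) := add_le_add_right hn1.le _
      _ ≤ U a + ε * U a := add_le_add_right (mul_le_mul_right (hUmono ha2) ε) _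
      _ = (1+ε) * U a := by rw [add_mul, one_mul]
    have hW2 : Wq a ≤ (1+ε) * Wq b := by
      have hsplit : νw (Ioi a) = νw (Ioc a b) + νw (Ioi b) := by
        rw [← Ioc_union_Ioi_eq_Ioi hab.le,
          measure_union (Ioc_disjoint_Ioi le_rfl) measurableSet_Ioi]
      calc Wq a = νw (Ioi a) := (hνwIoi a ha2).symm
      _ = νw (Ioc a b) + νw (Ioi b) := hsplit
      _ ≤ νw (Icc (x₀ - δ) (x₀ + δ)) + Wq b := by
          rw [hνwIoi b (by linarith)]
          exact add_le_add_left (measure_mono Ioc_subset_Icc_self) _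
      _ ≤ ε * Wq (x₀+1) + Wq b := add_le_add_left hn2.le _
      _ ≤ ε * Wq b + Wq b := add_le_add_left (mul_le_mul_right (hWanti hb1) ε) _
      _ = (1+ε) * Wq b := by rw [add_mul, one_mul, add_comm]
    -- the test set and function
    set E : Set ℝ := Aset ∩ Ioo a b with hEdef
    have hEmeas : MeasurableSet E := hAmeas.inter measurableSet_Ioo
    have hEsubA : E ⊆ Aset := inter_subset_left
    have hEsubI : E ⊆ Ioo a b := inter_subset_right
    have hEpos : volume E ≠ 0 := by
      refine (hx₀ (Aset ∩ Ioo a b) ?_).ne'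
      exact inter_mem_nhdsWithin Aset (Ioo_mem_nhds (by linarith) (by linarith))
    have hEfin : volume E ≠ ∞ :=
      ne_top_of_le_ne_top (by rw [Real.volume_Ioo]; exact ENNReal.ofReal_ne_top)
        (measure_mono hEsubI)
    set g : ℝ → ℝ≥0∞ := E.indicator (fun _ => 1) with hgdef
    have hgmeas : Measurable g := measurable_const.indicator hEmeas
    have hgne : ¬ (∀ᵐ x ∂(volume.restrict (Ioi (0:ℝ))), g x = 0) := by
      intro hae
      rw [ae_iff] at hae
      have hset2 : {x | ¬ g x = 0} = E := by
        ext x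
        rw [hgdef]
        by_cases hx : x ∈ E <;> simp [Set.indicator_apply, hx]
      rw [hset2, Measure.restrict_apply' measurableSet_Ioi,
        inter_eq_left.mpr (fun x hx => (hEsubA hx).1)] at hae
      exact hEpos hae
    have hle1 : cesaroNorm 1 (ENNReal.ofReal q) w v (fun x => f x * g x) /
        copsonNorm 1 (ENNReal.ofReal r) u (fun _ => 1) g ≤ lhs := by
      rw [hlhs, multNorm]
      exact le_iSup₂ (f := fun g _ => cesaroNorm 1 (ENNReal.ofReal q) w v
        (fun x => f x * g x) / copsonNorm 1 (ENNReal.ofReal r) u (fun _ => 1) g)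
        g ⟨hgmeas, hgne⟩
    set kappa : ℝ≥0∞ := lam2 * (U a ^ (1/r) * (Wq a ^ (1/q))⁻¹) * volume E with hkdef
    -- lower bound for the Cesàro norm
    have hYge : kappa * Wq b ^ (1/q)
        ≤ cesaroNorm 1 (ENNReal.ofReal q) w v (fun x => f x * g x) := by
      rw [hY g]
      have hinner : ∀ t : ℝ, b < t →
          lam2 * (U a ^ (1/r) * (Wq a ^ (1/q))⁻¹) * volume E
            ≤ ∫⁻ x in Ioo 0 t, f x * g x * v x := by
        intro t hbt
        have hpt : ∀ x ∈ Ioo (0:ℝ) t,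
            E.indicator (fun _ => lam2 * (U a ^ (1/r) * (Wq a ^ (1/q))⁻¹)) x
              ≤ f x * g x * v x := by
          intro x _
          by_cases hxE : x ∈ E
          · rw [Set.indicator_of_mem hxE]
            have hxA : lam2 < Φ x := (hEsubA hxE).2
            have hx0 : 0 < x := (hEsubA hxE).1
            have hgx : g x = 1 := by rw [hgdef]; exact Set.indicator_of_mem hxE _
            calc lam2 * (U a ^ (1/r) * (Wq a ^ (1/q))⁻¹)
                ≤ lam2 * (U x ^ (1/r) * (Wq x ^ (1/q))⁻¹) := by
                  refine mul_le_mul_right (mul_le_mul' ?_ ?_) _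
                  · exact ENNReal.rpow_le_rpow (hUmono (hEsubI hxE).1.le) hp0.le
                  · rw [ENNReal.inv_le_inv]
                    exact ENNReal.rpow_le_rpow (hWanti (hEsubI hxE).1.le) hq0'.le
            _ ≤ Φ x * (U x ^ (1/r) * (Wq x ^ (1/q))⁻¹) := mul_le_mul_left hxA.le _
            _ = f x * v x := (hfveq x hx0).symm
            _ = f x * g x * v x := by rw [hgx, mul_one]
          · rw [Set.indicator_of_notMem hxE]
            exact zero_le
        have hEsub3 : E ⊆ Ioo 0 t := fun x hx =>
          mem_Ioo.mpr ⟨(hEsubA hx).1, (hEsubI hx).2.trans hbt⟩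
        calc lam2 * (U a ^ (1/r) * (Wq a ^ (1/q))⁻¹) * volume E
            = ∫⁻ x in Ioo 0 t,
                E.indicator (fun _ => lam2 * (U a ^ (1/r) * (Wq a ^ (1/q))⁻¹)) x := by
              rw [lintegral_indicator hEmeas, setLIntegral_const,
                Measure.restrict_apply hEmeas, inter_eq_left.mpr hEsub3]
        _ ≤ ∫⁻ x in Ioo 0 t, f x * g x * v x := setLIntegral_mono' measurableSet_Ioo hpt
      have e1 : ∫⁻ t in Ioi (0:ℝ),
          (Ioi b).indicator (fun t => ((lam2 * (U a ^ (1/r) * (Wq a ^ (1/q))⁻¹) * volume E)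
            * w t) ^ q) t
          = (lam2 * (U a ^ (1/r) * (Wq a ^ (1/q))⁻¹) * volume E) ^ q * Wq b := by
        rw [lintegral_indicator measurableSet_Ioi,
          Measure.restrict_restrict measurableSet_Ioi,
          inter_eq_left.mpr (Ioi_subset_Ioi hb0.le)]
        have e3 : ∀ t : ℝ, ((lam2 * (U a ^ (1/r) * (Wq a ^ (1/q))⁻¹) * volume E) * w t) ^ q
            = (lam2 * (U a ^ (1/r) * (Wq a ^ (1/q))⁻¹) * volume E) ^ q * w t ^ q :=
          fun t => ENNReal.mul_rpow_of_nonneg _ _ hq0.le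
        simp_rw [e3]
        rw [lintegral_const_mul _ (hwmeas.pow_const q)]
      calc kappa * Wq b ^ (1/q)
          = ((lam2 * (U a ^ (1/r) * (Wq a ^ (1/q))⁻¹) * volume E) ^ q * Wq b) ^ (1/q) := by
            rw [hkdef, ENNReal.mul_rpow_of_nonneg _ _ hq0'.le, ← ENNReal.rpow_mul,
              mul_one_div_cancel hq0.ne', ENNReal.rpow_one]
      _ ≤ (∫⁻ t in Ioi (0:ℝ), ((∫⁻ x in Ioo 0 t, f x * g x * v x) * w t) ^ q) ^ (1/q) := by
          refine ENNReal.rpow_le_rpow ?_ hq0'.le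
          rw [← e1]
          refine setLIntegral_mono' measurableSet_Ioi ?_
          intro t _
          by_cases hbt : b < t
          · rw [Set.indicator_of_mem (mem_Ioi.mpr hbt)]
            exact ENNReal.rpow_le_rpow (mul_le_mul_left (hinner t hbt) _) hq0.le
          · rw [Set.indicator_of_notMem (by simpa using hbt)]
            exact zero_le
    -- upper bound for the Copson norm
    have hXle : copsonNorm 1 (ENNReal.ofReal r) u (fun _ => 1) g
        ≤ volume E * U b ^ (1/r) := by
      rw [hX g]
      have hG : ∀ t : ℝ, (∫⁻ y in Ioi t, g y) = volume (E ∩ Ioi t) := by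
        intro t
        rw [hgdef]
        rw [lintegral_indicator hEmeas, setLIntegral_const, one_mul,
          Measure.restrict_apply hEmeas]
      calc (∫⁻ t in Ioi (0:ℝ), u t ^ r * (∫⁻ y in Ioi t, g y) ^ r) ^ (1/r)
          ≤ ((volume E) ^ r * U b) ^ (1/r) := by
            refine ENNReal.rpow_le_rpow ?_ hp0.le
            have e2 : ∫⁻ t in Ioi (0:ℝ),
                (Ioo 0 b).indicator (fun t => u t ^ r * (volume E) ^ r) t
                = (volume E) ^ r * U b := by
              rw [lintegral_indicator measurableSet_Ioo,
                Measure.restrict_restrict measurableSet_Ioo,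
                inter_eq_left.mpr Ioo_subset_Ioi_self,
                lintegral_mul_const _ (humeas.pow_const r)]
              exact mul_comm _ _
            rw [← e2]
            refine setLIntegral_mono' measurableSet_Ioi ?_
            intro t ht
            rcases lt_or_ge t b with htb | htb
            · rw [Set.indicator_of_mem (mem_Ioo.mpr ⟨mem_Ioi.mp ht, htb⟩)]
              refine mul_le_mul_right (ENNReal.rpow_le_rpow ?_ hr.le) _
              rw [hG t]
              exact measure_mono inter_subset_left
            · have hempty : E ∩ Ioi t = ∅ := by
                ext z
                simp only [mem_inter_iff, mem_Ioi, mem_empty_iff_false, iff_false, not_and]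
                intro hz1 hz2
                have := (hEsubI hz1).2
                linarith
              rw [Set.indicator_of_notMem (fun hmem => absurd hmem.2 (not_lt.mpr htb))]
              refine le_of_eq ?_
              rw [hG t, hempty, measure_empty, ENNReal.zero_rpow_of_pos hr, mul_zero]
      _ = volume E * U b ^ (1/r) := by
            rw [ENNReal.mul_rpow_of_nonneg _ _ hp0.le, ← ENNReal.rpow_mul,
              mul_one_div_cancel hr.ne', ENNReal.rpow_one]
    -- conclude
    have hden0 : volume E * U b ^ (1/r) ≠ 0 :=
      mul_ne_zero hEpos (hUrprop b hb0).1
    have hdentop : volume E * U b ^ (1/r) ≠ ∞ :=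
      ENNReal.mul_ne_top hEfin (hUrprop b hb0).2
    have hkey : lam * ((1+ε) ^ (1/r)) * Wq a ^ (1/q) ≤ lam2 * Wq b ^ (1/q) := by
      calc lam * ((1+ε) ^ (1/r)) * Wq a ^ (1/q)
          ≤ lam * ((1+ε) ^ (1/r)) * ((1+ε) ^ (1/q) * Wq b ^ (1/q)) := by
            refine mul_le_mul_right ?_ _
            rw [← ENNReal.mul_rpow_of_nonneg _ _ hq0'.le]
            exact ENNReal.rpow_le_rpow hW2 hq0'.le
      _ = (lam * (1+ε) ^ sexp) * Wq b ^ (1/q) := by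
            rw [hsdef, ENNReal.rpow_add _ _ h1ε0 h1εtop]
            ring
      _ ≤ lam2 * Wq b ^ (1/q) := mul_le_mul_left hεle _
    have hfrac : lam * ((1+ε) ^ (1/r)) ≤ lam2 * Wq b ^ (1/q) / Wq a ^ (1/q) := by
      rw [ENNReal.le_div_iff_mul_le (Or.inl (hWrprop a ha0).1) (Or.inl (hWrprop a ha0).2)]
      exact hkey
    have hnum : lam * (volume E * U b ^ (1/r)) ≤ kappa * Wq b ^ (1/q) := by
      calc lam * (volume E * U b ^ (1/r))
          ≤ lam * (volume E * ((1+ε) ^ (1/r) * U a ^ (1/r))) := by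
            refine mul_le_mul_right (mul_le_mul_right ?_ _) _
            rw [← ENNReal.mul_rpow_of_nonneg _ _ hp0.le]
            exact ENNReal.rpow_le_rpow hU2 hp0.le
      _ = (lam * (1+ε) ^ (1/r)) * (volume E * U a ^ (1/r)) := by ring
      _ ≤ (lam2 * Wq b ^ (1/q) / Wq a ^ (1/q)) * (volume E * U a ^ (1/r)) :=
            mul_le_mul_left hfrac _
      _ = kappa * Wq b ^ (1/q) := by
            rw [hkdef, div_eq_mul_inv]
            ring
    have hlam_le : lam ≤ kappa * Wq b ^ (1/q) / (volume E * U b ^ (1/r)) :=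
      (ENNReal.le_div_iff_mul_le (Or.inl hden0) (Or.inl hdentop)).mpr hnum
    have hdiv : kappa * Wq b ^ (1/q) / (volume E * U b ^ (1/r))
        ≤ cesaroNorm 1 (ENNReal.ofReal q) w v (fun x => f x * g x) /
          copsonNorm 1 (ENNReal.ofReal r) u (fun _ => 1) g :=
      ENNReal.div_le_div hYge hXle
    have hfinal : lam ≤ lhs := le_trans hlam_le (le_trans hdiv hle1)
    exact absurd hfinal (not_le.mpr hlam1)
  · -- UPPER BOUND
    rw [hlhs, multNorm]
    refine iSup_le fun g => iSup_le fun hg => ?_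
    obtain ⟨hgmeas, -⟩ := hg
    rw [hY g, hX g]
    set ρ : ℝ → ℝ≥0∞ := fun x => U x ^ (1/r) * (Wq x ^ (1/q))⁻¹ with hρdef
    have hρmeas : Measurable ρ := (hUmeas.pow_const _).mul (hWmeas.pow_const _).inv
    have hFmono : Monotone (fun t : ℝ => ∫⁻ x in Ioo 0 t, g x * ρ x) :=
      fun s t hst => lintegral_mono_set (Ioo_subset_Ioo le_rfl hst)
    have hFmeas : Measurable (fun t : ℝ => ∫⁻ x in Ioo 0 t, g x * ρ x) :=
      hFmono.measurable
    have hstep : ∀ t : ℝ, (∫⁻ x in Ioo 0 t, f x * g x * v x)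
        ≤ rhs * (∫⁻ x in Ioo 0 t, g x * ρ x) := by
      intro t
      have h1 : ∀ᵐ x ∂(volume.restrict (Ioi (0:ℝ))), Φ x ≤ rhs := by
        rw [hrhs]; exact ae_le_essSup Φ
      have hae : ∀ᵐ x ∂(volume.restrict (Ioo (0:ℝ) t)),
          f x * g x * v x ≤ rhs * (g x * ρ x) := by
        filter_upwards [ae_restrict_of_ae_restrict_of_subset Ioo_subset_Ioi_self h1,
          self_mem_ae_restrict measurableSet_Ioo] with x hx1 hx2
        calc f x * g x * v x = (f x * v x) * g x := by ring
        _ = (Φ x * ρ x) * g x := by rw [hfveq x hx2.1]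
        _ ≤ (rhs * ρ x) * g x := mul_le_mul_left (mul_le_mul_left hx1 _) _
        _ = rhs * (g x * ρ x) := by ring
      calc (∫⁻ x in Ioo 0 t, f x * g x * v x) ≤ ∫⁻ x in Ioo 0 t, rhs * (g x * ρ x) :=
            lintegral_mono_ae hae
      _ = rhs * ∫⁻ x in Ioo 0 t, g x * ρ x := lintegral_const_mul _ (hgmeas.mul hρmeas)
    have hS := S_est hr hr1 hq1 u w g humeas hwmeas hgmeas hUfin
      (fun x hx => (hWprop x hx).2) (fun x hx => (hWprop x hx).1)
    refine ENNReal.div_le_of_le_mul ?_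
    calc (∫⁻ t in Ioi (0:ℝ), ((∫⁻ x in Ioo 0 t, f x * g x * v x) * w t) ^ q) ^ (1/q)
        ≤ (∫⁻ t in Ioi (0:ℝ), (rhs ^ q) * (((∫⁻ x in Ioo 0 t, g x * ρ x) * w t) ^ q)) ^ (1/q) := by
          refine ENNReal.rpow_le_rpow (lintegral_mono fun t => ?_) hq0'.le
          rw [← ENNReal.mul_rpow_of_nonneg _ _ hq0.le, ← mul_assoc]
          exact ENNReal.rpow_le_rpow (mul_le_mul_left (hstep t) _) hq0.le
    _ = rhs * (∫⁻ t in Ioi (0:ℝ), ((∫⁻ x in Ioo 0 t, g x * ρ x) * w t) ^ q) ^ (1/q) := by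
          rw [lintegral_const_mul (f := fun t => ((∫⁻ x in Ioo 0 t, g x * ρ x) * w t) ^ q) _ ((hFmeas.mul hwmeas).pow_const q),
            ENNReal.mul_rpow_of_nonneg _ _ hq0'.le,
            ← ENNReal.rpow_mul, mul_one_div_cancel hq0.ne', ENNReal.rpow_one]
    _ ≤ rhs * (ENNReal.ofReal (1/r) *
          (∫⁻ t in Ioi (0:ℝ), u t ^ r * (∫⁻ y in Ioi t, g y) ^ r) ^ (1/r)) :=
          mul_le_mul_right hS _
    _ = ENNReal.ofReal (1/r) * rhs *
          (∫⁻ t in Ioi (0:ℝ), u t ^ r * (∫⁻ y in Ioi t, g y) ^ r) ^ (1/r) := by ring
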